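/- arXiv:1210.6419 — 6 statements merged into one kernel-verified Lean document; each statement's English description precedes it below -/
import Mathlib

section
/- Let z₀ = x₀ + iy₀ be a complex (non-real, y₀ ≠ 0) root of z² − cz + α₀ + β₀e^{−chz} = 0 with c > 0, h > 0, β₀ > 0. If x₀ < λ where λ is a positive real root of the same equation with 2λ < c, then |y₀| > π/(ch). -/
open Real Complex
/-- A non-real root `z₀ = x₀ + i y₀` of `z² − cz + α₀ + β₀ e^{−chz} = 0` whose real part
is below a positive real root `λ` (with `2λ < c`) must have `|y₀| > π/(ch)`. -/
theorem stmt_3 (c h α₀ β₀ lam x₀ y₀ : ℝ) (hc : 0 < c) (hh : 0 < h) (hβ : 0 < β₀)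
    (hy : y₀ ≠ 0)
    (hroot : (x₀ + y₀ * Complex.I) ^ 2 - (c : ℂ) * (x₀ + y₀ * Complex.I) + (α₀ : ℂ)
      + (β₀ : ℂ) * Complex.exp (-(c * h : ℂ) * (x₀ + y₀ * Complex.I)) = 0)
    (hlampos : 0 < lam) (hlam : lam ^ 2 - c * lam + α₀ + β₀ * Real.exp (-(c * h) * lam) = 0)
    (hlamc : 2 * lam < c) (hx : x₀ < lam) :
    |y₀| > Real.pi / (c * h) := by
  have him := congrArg Complex.im hroot
  simp [Complex.ext_iff, Complex.exp_im, Complex.exp_re, Complex.add_im, Complex.mul_im,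
    Complex.mul_re, pow_two] at him
  have hch : 0 < c * h := mul_pos hc hh
  have he : 0 < Real.exp (-(c * h * x₀)) := Real.exp_pos _
  have h2 : β₀ * Real.exp (-(c * h * x₀)) * (Real.sin (c * h * y₀) * y₀)
      = (2 * x₀ - c) * (y₀ * y₀) := by linear_combination (-y₀) * him
  have hsy : Real.sin (c * h * y₀) * y₀ < 0 := by
    nlinarith [mul_pos hβ he, mul_self_pos.mpr hy]
  have hsabs : Real.sin (c * h * |y₀|) < 0 := by
    rcases hy.lt_or_gt with hneg | hpos
    · rw [abs_of_neg hneg]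
      have : Real.sin (c * h * -y₀) = -Real.sin (c * h * y₀) := by
        rw [mul_neg, Real.sin_neg]
      rw [this]
      nlinarith
    · rw [abs_of_pos hpos]
      nlinarith
  by_contra hle
  push_neg at hle
  have h1 : c * h * |y₀| ≤ Real.pi := by
    rw [le_div_iff₀ hch] at hle; nlinarith
  have h2 : 0 ≤ c * h * |y₀| := le_of_lt (mul_pos hch (abs_pos.2 hy))
  exact absurd (Real.sin_nonneg_of_nonneg_of_le_pi h2 h1) (not_le.2 hsabs)
end

section
/- Suppose y : ℝ → ℝ is a positive, continuous function on [T₁ − r, ∞) (with r > 0), and there is ξ > 0 with ξ(e^{ρ r/2} − 1) > ρ for some ρ > 0, such that y(t) ≥ ξ ∫_{t − r/2}^{t} y(s) ds for all t ≥ T₁ − r. If y(s) > C e^{−ρ s} for all s ∈ [T₁ − r, T₁] with C > 0, then y(s) > C e^{−ρ s} for all s ≥ T₁ − r. In particular, y is not superexponentially small at +∞. -/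
open Real Set intervalIntegral
open Topology Filter

/-- A positive continuous function satisfying `y t ≥ ξ ∫_{t−r/2}^t y` with
`ξ (e^{ρr/2} − 1) > ρ` cannot decay faster than `C e^{−ρ t}` if it dominates it initially. -/
theorem stmt_4 (r ρ ξ C T₁ : ℝ) (hr : 0 < r) (hρ : 0 < ρ) (hξ : 0 < ξ) (hC : 0 < C)
    (hgap : ξ * (Real.exp (ρ * r / 2) - 1) > ρ)
    (y : ℝ → ℝ) (hcont : ContinuousOn y (Ici (T₁ - r)))
    (hpos : ∀ t ∈ Ici (T₁ - r), 0 < y t)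
    (hineq : ∀ t ∈ Ici (T₁ - r), y t ≥ ξ * ∫ s in (t - r / 2)..t, y s)
    (hinit : ∀ s ∈ Icc (T₁ - r) T₁, y s > C * Real.exp (-ρ * s)) :
    ∀ s ∈ Ici (T₁ - r), y s > C * Real.exp (-ρ * s) := by
  by_contra hcon
  push_neg at hcon
  set g : ℝ → ℝ := fun s => y s - C * Real.exp (-ρ * s) with hg
  have hgcont : ContinuousOn g (Ici (T₁ - r)) := by
    apply hcont.sub
    exact (Continuous.continuousOn (by continuity))
  set S : Set ℝ := Ici (T₁ - r) ∩ g ⁻¹' (Iic 0) with hSdef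
  have hS_ne : S.Nonempty := by
    obtain ⟨s, hs, hle⟩ := hcon
    exact ⟨s, hs, by simpa [g] using sub_nonpos.mpr hle⟩
  have hS_bdd : BddBelow S := ⟨T₁ - r, fun s hs => hs.1⟩
  have hS_closed : IsClosed S :=
    hgcont.preimage_isClosed_of_isClosed isClosed_Ici isClosed_Iic
  set t' := sInf S with ht'
  have ht'_mem : t' ∈ S := hS_closed.csInf_mem hS_ne hS_bdd
  have ht'_ge : T₁ - r ≤ t' := ht'_mem.1
  have ht'_le : y t' ≤ C * Real.exp (-ρ * t') := by
    have := ht'_mem.2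
    simpa [g, sub_nonpos] using this
  have ht'_gt : T₁ < t' := by
    by_contra hle
    push_neg at hle
    exact absurd ht'_le (not_le.mpr (hinit t' ⟨ht'_ge, hle⟩))
  have ha : T₁ - r ≤ t' - r / 2 := by linarith
  have hlt : ∀ s, T₁ - r ≤ s → s < t' → C * Real.exp (-ρ * s) < y s := by
    intro s hs hst
    have hns : s ∉ S := notMem_of_lt_csInf hst hS_bdd
    have : ¬ (g s ≤ 0) := fun h => hns ⟨hs, h⟩
    simpa [g, sub_nonpos] using this
  -- y ≥ C e^{-ρ s} on [t'-r/2, t']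
  have hge : ∀ s ∈ Icc (t' - r / 2) t', C * Real.exp (-ρ * s) ≤ y s := by
    intro s hs
    rcases lt_or_eq_of_le hs.2 with h | h
    · exact (hlt s (le_trans ha hs.1) h).le
    · subst h
      -- limit from the left
      have hlt2 : t' - r / 2 < t' := by linarith
      have hclo : t' ∈ closure (Ioo (t' - r / 2) t') := by
        rw [closure_Ioo (ne_of_lt hlt2)]
        exact ⟨hlt2.le, le_refl _⟩
      haveI : (𝓝[Ioo (t' - r / 2) t'] t').NeBot :=
        mem_closure_iff_nhdsWithin_neBot.mp hclo
      have key : Filter.Tendsto g (𝓝[Ioo (t' - r / 2) t'] t') (𝓝 (g t')) := by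
        apply (hgcont t' ht'_ge).mono
        intro x hx
        exact le_trans ha hx.1.le
      have h0 : 0 ≤ g t' := by
        refine ge_of_tendsto key ?_
        filter_upwards [self_mem_nhdsWithin] with x hx
        have := hlt x (le_trans ha hx.1.le) hx.2
        show 0 ≤ y x - C * Real.exp (-ρ * x)
        linarith
      simpa [g, sub_nonneg] using h0
  -- integrability
  have hsub : Icc (t' - r / 2) t' ⊆ Ici (T₁ - r) := fun x hx => le_trans ha hx.1
  have hyint : IntervalIntegrable y MeasureTheory.volume (t' - r / 2) t' := by
    apply ContinuousOn.intervalIntegrable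
    rw [uIcc_of_le (by linarith)]
    exact hcont.mono hsub
  have heint : IntervalIntegrable (fun s => C * Real.exp (-ρ * s))
      MeasureTheory.volume (t' - r / 2) t' := (Continuous.intervalIntegrable (by continuity) _ _)
  -- compute the model integral
  have hFd : ∀ s ∈ uIcc (t' - r / 2) t',
      HasDerivAt (fun u => -(C / ρ) * Real.exp (-ρ * u)) (C * Real.exp (-ρ * s)) s := by
    intro s _
    have h1 : HasDerivAt (fun u : ℝ => -ρ * u) (-ρ) s := by
      simpa using (hasDerivAt_id s).const_mul (-ρ)
    have h2 := (h1.exp).const_mul (-(C / ρ))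
    convert h2 using 1
    case e'_4 => rfl
    case e'_5 => rfl
    rw [mul_comm (Real.exp _), ← mul_assoc, neg_mul_neg, div_mul_cancel₀ C hρ.ne']
  have hint_eq : (∫ s in (t' - r / 2)..t', C * Real.exp (-ρ * s))
      = C / ρ * Real.exp (-ρ * t') * (Real.exp (ρ * r / 2) - 1) := by
    rw [intervalIntegral.integral_eq_sub_of_hasDerivAt hFd heint]
    have : -ρ * (t' - r / 2) = -ρ * t' + ρ * r / 2 := by ring
    rw [this, Real.exp_add]
    ring
  have hmono : (∫ s in (t' - r / 2)..t', C * Real.exp (-ρ * s))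
      ≤ ∫ s in (t' - r / 2)..t', y s :=
    intervalIntegral.integral_mono_on (by linarith) heint hyint hge
  have h1 := hineq t' ht'_ge
  have hexp_pos : 0 < Real.exp (-ρ * t') := Real.exp_pos _
  have hstrict : C * Real.exp (-ρ * t') < ξ * (C / ρ * Real.exp (-ρ * t') * (Real.exp (ρ * r / 2) - 1)) := by
    rw [show ξ * (C / ρ * Real.exp (-ρ * t') * (Real.exp (ρ * r / 2) - 1))
        = (C * Real.exp (-ρ * t') / ρ) * (ξ * (Real.exp (ρ * r / 2) - 1)) by ring]
    have hpos' : 0 < C * Real.exp (-ρ * t') / ρ := by positivity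
    calc C * Real.exp (-ρ * t') = (C * Real.exp (-ρ * t') / ρ) * ρ := by field_simp
    _ < _ := by exact mul_lt_mul_of_pos_left hgap hpos'
  have : y t' > C * Real.exp (-ρ * t') := by
    calc C * Real.exp (-ρ * t') < ξ * (C / ρ * Real.exp (-ρ * t') * (Real.exp (ρ * r / 2) - 1)) := hstrict
    _ = ξ * ∫ s in (t' - r / 2)..t', C * Real.exp (-ρ * s) := by rw [hint_eq]
    _ ≤ ξ * ∫ s in (t' - r / 2)..t', y s := by
        exact mul_le_mul_of_nonneg_left hmono hξ.le
    _ ≤ y t' := h1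
  linarith
end

section
/- Let φ : ℝ → (0, κ) be a C² solution of φ''(t) − cφ'(t) + f(φ(t), φ(t − τ)) = 0 where c > 0, τ ≥ 0, f is continuous and f(x, y) > 0 for all x, y ∈ (0, κ), and φ(−∞) = 0, φ(+∞) = κ. Then φ'(t) > 0 for all t ∈ ℝ. -/
open Real Set Filter Topology

/-- A heteroclinic profile of `φ'' − cφ' + f(φ(t), φ(t−τ)) = 0` with positive
nonlinearity on `(0,κ)²` is strictly increasing. -/
theorem stmt_5 (κ c τ : ℝ) (hκ : 0 < κ) (hc : 0 < c) (hτ : 0 ≤ τ)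
    (f : ℝ → ℝ → ℝ) (hfc : Continuous fun p : ℝ × ℝ => f p.1 p.2)
    (hfpos : ∀ x ∈ Ioo 0 κ, ∀ y ∈ Ioo 0 κ, 0 < f x y)
    (φ : ℝ → ℝ) (hsm : ContDiff ℝ 2 φ)
    (hrange : ∀ t, φ t ∈ Ioo 0 κ)
    (heq : ∀ t, deriv (deriv φ) t - c * deriv φ t + f (φ t) (φ (t - τ)) = 0)
    (hminus : Tendsto φ atBot (nhds 0)) (hplus : Tendsto φ atTop (nhds κ)) :
    ∀ t, 0 < deriv φ t := by
  have hsm' : ContDiff ℝ (1 + 1) φ := by norm_num; exact hsm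
  have hcd1 : ContDiff ℝ 1 (deriv φ) := (contDiff_succ_iff_deriv.mp hsm').2.2
  set g := deriv φ with hg
  have hgdiff : Differentiable ℝ g := hcd1.differentiable one_ne_zero
  have hgcont : Continuous g := hgdiff.continuous
  have hderiv_neg : ∀ t, g t = 0 → deriv g t < 0 := by
    intro t ht
    have h := heq t
    have hf : 0 < f (φ t) (φ (t - τ)) := hfpos _ (hrange t) _ (hrange (t - τ))
    rw [ht] at h
    linarith
  by_contra hcon
  push_neg at hcon
  obtain ⟨t₀, ht₀⟩ := hcon
  have hex : ∃ t₁, g t₁ < 0 := by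
    rcases lt_or_eq_of_le ht₀ with h | h
    · exact ⟨t₀, h⟩
    · have hd := hderiv_neg t₀ h
      have hslope : Tendsto (slope g t₀) (𝓝[>] t₀) (𝓝 (deriv g t₀)) :=
        (hasDerivAt_iff_tendsto_slope.mp (hgdiff t₀).hasDerivAt).mono_left
          (nhdsWithin_mono _ (fun x hx => ne_of_gt hx))
      have hev : ∀ᶠ x in 𝓝[>] t₀, slope g t₀ x < 0 :=
        hslope.eventually_lt_const hd
      obtain ⟨x, hxlt, hx⟩ := (hev.and self_mem_nhdsWithin).exists
      refine ⟨x, ?_⟩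
      have hxgt : (t₀ : ℝ) < x := hx
      have hs : slope g t₀ x = g x / (x - t₀) := by
        rw [slope_def_field, h]; ring
      rw [hs] at hxlt
      rcases div_neg_iff.mp hxlt with ⟨_, h2⟩ | ⟨h1, _⟩
      · linarith
      · exact h1
  obtain ⟨t₁, ht₁⟩ := hex
  have hneg : ∀ t ∈ Ici t₁, g t < 0 := by
    by_contra hcon2
    push_neg at hcon2
    obtain ⟨s₀, hs₀mem, hs₀⟩ := hcon2
    set S := {t | t₁ ≤ t ∧ 0 ≤ g t} with hS
    have hSne : S.Nonempty := ⟨s₀, hs₀mem, hs₀⟩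
    have hSbdd : BddBelow S := ⟨t₁, fun x hx => hx.1⟩
    have hScl : IsClosed S :=
      (isClosed_le continuous_const continuous_id).inter
        (isClosed_le continuous_const hgcont)
    set s := sInf S with hsdef
    have hsS : s ∈ S := hScl.csInf_mem hSne hSbdd
    have hlt : ∀ t, t₁ ≤ t → t < s → g t < 0 := by
      intro t h1 h2
      by_contra h
      push_neg at h
      exact absurd (csInf_le hSbdd ⟨h1, h⟩) (not_le.mpr h2)
    have hst : t₁ < s := by
      rcases lt_or_ge t₁ s with h | h
      · exact h
      · have heqs : s = t₁ := le_antisymm h hsS.1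
        rw [heqs] at hsS
        linarith [hsS.2]
    have hgs : g s = 0 := by
      refine le_antisymm ?_ hsS.2
      have htend : Tendsto g (𝓝[<] s) (𝓝 (g s)) :=
        (hgcont.continuousAt).continuousWithinAt.tendsto
      have hev : ∀ᶠ t in 𝓝[<] s, g t ≤ 0 := by
        filter_upwards [Ioo_mem_nhdsLT_of_mem ⟨hst, le_refl s⟩] with t ht
        exact le_of_lt (hlt t (le_of_lt ht.1) ht.2)
      exact le_of_tendsto htend hev
    have hd := hderiv_neg s hgs
    have hslope : Tendsto (slope g s) (𝓝[<] s) (𝓝 (deriv g s)) :=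
      (hasDerivAt_iff_tendsto_slope.mp (hgdiff s).hasDerivAt).mono_left
        (nhdsWithin_mono _ (fun x hx => ne_of_lt hx))
    have hge : 0 ≤ deriv g s := by
      refine ge_of_tendsto hslope ?_
      filter_upwards [Ioo_mem_nhdsLT_of_mem ⟨hst, le_refl s⟩] with t ht
      have hgt : g t < 0 := hlt t (le_of_lt ht.1) ht.2
      have hs : slope g s t = g t / (t - s) := by
        rw [slope_def_field, hgs]; ring
      rw [hs]
      exact le_of_lt (div_pos_of_neg_of_neg hgt (by linarith [ht.2]))
    linarith
  have hanti : StrictAntiOn φ (Ici t₁) := by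
    refine strictAntiOn_of_deriv_neg (convex_Ici t₁) (hsm.continuous.continuousOn) ?_
    intro t ht
    rw [interior_Ici] at ht
    exact hneg t (Set.mem_Ici.mpr (le_of_lt (Set.mem_Ioi.mp ht)))
  have hle : κ ≤ φ (t₁ + 1) := by
    refine le_of_tendsto hplus ?_
    filter_upwards [eventually_ge_atTop (t₁ + 2)] with t ht
    exact le_of_lt (hanti (by simp : t₁ ≤ t₁ + 1) (by linarith : t₁ ≤ t) (by linarith))
  linarith [(hrange (t₁ + 1)).2]
end

section
/- Under the representation of the previous context, every bounded solution φ with 0 ≤ φ(t) ≤ κ of φ'' − cφ' + f(φ(·), φ(·−r)) = 0 has derivative bounded by |φ'(t)| ≤ κ + max_{[0,κ]²}|f| for all t ∈ ℝ. -/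
open Real Set

lemma aux_blowup (a D κ : ℝ) (ha : 0 < a) (hD : 0 ≤ D) (hκ : 0 ≤ κ)
    (u p u' p' : ℝ → ℝ)
    (hu : ∀ t, HasDerivAt u (u' t) t) (hp : ∀ t, HasDerivAt p (p' t) t)
    (hu' : ∀ t, a * u t ≤ u' t) (hp' : ∀ t, u t - D ≤ p' t)
    (hpb : ∀ t, p t ∈ Icc (0:ℝ) κ) (t₀ : ℝ) (h0 : 0 < u t₀) : False := by
  set q : ℝ → ℝ := fun t => Real.exp (-(a*t)) * u t with hqdef
  have hq : ∀ t, HasDerivAt q (Real.exp (-(a*t)) * (u' t - a * u t)) t := by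
    intro t
    have h1 : HasDerivAt (fun t : ℝ => -(a*t)) (-a) t := by
      exact (((hasDerivAt_id t).const_mul a).neg).congr_deriv (by simp)
    have h2 := (Real.hasDerivAt_exp (-(a*t))).comp t h1
    have h3 := h2.mul (hu t)
    refine h3.congr_deriv ?_
    rw [Function.comp_apply]
    ring
  have hqmono : Monotone q := by
    apply monotone_of_deriv_nonneg (fun t => (hq t).differentiableAt)
    intro t
    rw [(hq t).deriv]
    have h := hu' t
    have : (0:ℝ) ≤ u' t - a * u t := by linarith
    positivity
  -- growth of u
  have hgrow : ∀ t, t₀ ≤ t → Real.exp (a*(t - t₀)) * u t₀ ≤ u t := by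
    intro t ht
    have h1 : q t₀ ≤ q t := hqmono ht
    have h2 : (0:ℝ) < Real.exp (-(a*t)) := Real.exp_pos _
    rw [hqdef] at h1
    simp only at h1
    have h3 : Real.exp (a*(t-t₀)) * u t₀ = Real.exp (a*t) * (Real.exp (-(a*t₀)) * u t₀) := by
      rw [← mul_assoc, ← Real.exp_add]
      ring_nf
    rw [h3]
    have h4 : Real.exp (a*t) * (Real.exp (-(a*t₀)) * u t₀) ≤ Real.exp (a*t) * (Real.exp (-(a*t)) * u t) :=
      mul_le_mul_of_nonneg_left h1 (Real.exp_pos _).le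
    calc Real.exp (a*t) * (Real.exp (-(a*t₀)) * u t₀) ≤ Real.exp (a*t) * (Real.exp (-(a*t)) * u t) := h4
      _ = u t := by rw [← mul_assoc, ← Real.exp_add]; simp
  set t₁ : ℝ := t₀ + (D+1)/(a * u t₀) with ht₁def
  have key : ∀ t, t₁ ≤ t → 1 ≤ p' t := by
    intro t ht
    have ht0 : t₀ ≤ t := by
      have : 0 ≤ (D+1)/(a*u t₀) := by positivity
      linarith [ht₁def ▸ ht]
    have h1 := hgrow t ht0
    have h2 : 1 + a*(t-t₀) ≤ Real.exp (a*(t-t₀)) := by linarith [Real.add_one_le_exp (a*(t-t₀))]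
    have h3 : (1 + a*(t-t₀)) * u t₀ ≤ Real.exp (a*(t-t₀)) * u t₀ :=
      mul_le_mul_of_nonneg_right h2 h0.le
    have h4 : (D+1)/(a*u t₀) ≤ t - t₀ := by rw [ht₁def] at ht; linarith
    have h5 : D + 1 ≤ a*(t-t₀) * u t₀ := by
      rw [div_le_iff₀ (by positivity)] at h4
      nlinarith
    have h6 : D + 1 ≤ u t := by nlinarith
    linarith [hp' t]
  set P : ℝ → ℝ := fun t => p t - t with hPdef
  have hP : ∀ t, HasDerivAt P (p' t - 1) t := fun t => (hp t).sub (hasDerivAt_id t)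
  have hPmono : MonotoneOn P (Ici t₁) := by
    apply monotoneOn_of_deriv_nonneg (convex_Ici t₁)
    · exact (fun t _ => ((hP t).differentiableAt).continuousAt.continuousWithinAt)
    · exact fun x _ => ((hP x).differentiableAt).differentiableWithinAt
    · intro x hx
      rw [interior_Ici] at hx
      rw [(hP x).deriv]
      linarith [key x (le_of_lt hx)]
  have h7 : P t₁ ≤ P (t₁ + κ + 1) := hPmono (mem_Ici.mpr (le_refl t₁)) (by simp [mem_Ici]; linarith) (by linarith)
  have h8 := hpb t₁
  have h9 := hpb (t₁ + κ + 1)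
  simp only [hPdef, mem_Icc] at h7 h8 h9
  linarith [h8.1, h9.2]

set_option maxHeartbeats 2000000 in
/-- Uniform derivative bound `|φ'| ≤ κ + max |f|` for bounded profiles. -/
theorem stmt_14 (c r κ M : ℝ) (hc : 0 < c) (hr : 0 ≤ r) (hκ : 0 < κ)
    (f : ℝ → ℝ → ℝ) (hfc : Continuous fun p : ℝ × ℝ => f p.1 p.2)
    (hM : ∀ x ∈ Icc 0 κ, ∀ y ∈ Icc 0 κ, |f x y| ≤ M)
    (φ : ℝ → ℝ) (hφ : ContDiff ℝ 2 φ) (hb : ∀ t, φ t ∈ Icc 0 κ)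
    (heq : ∀ t, deriv (deriv φ) t - c * deriv φ t + f (φ t) (φ (t - r)) = 0) :
    ∀ t, |deriv φ t| ≤ κ + M := by
  have hM0 : 0 ≤ M := le_trans (abs_nonneg _)
    (hM 0 ⟨le_refl _, hκ.le⟩ 0 ⟨le_refl _, hκ.le⟩)
  have hfb : ∀ t, |f (φ t) (φ (t - r))| ≤ M := fun t => hM _ (hb t) _ (hb (t - r))
  set s : ℝ := Real.sqrt (c^2 + 4) with hsdef
  have hs2 : s^2 = c^2 + 4 := Real.sq_sqrt (by positivity)
  have hs0 : 0 ≤ s := Real.sqrt_nonneg _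
  have hs : 2 ≤ s := by nlinarith
  set z₂ : ℝ := (c + s)/2 with hz2def
  set z₁ : ℝ := (c - s)/2 with hz1def
  have hz₂ : 0 < z₂ := by rw [hz2def]; linarith
  have hz₁ : z₁ < 0 := by
    have : c < s := by nlinarith
    rw [hz1def]; linarith
  have hmul : z₁ * z₂ = -1 := by
    have h : z₁ * z₂ = (c^2 - s^2)/4 := by rw [hz1def, hz2def]; ring
    rw [h, hs2]; ring
  have hsum : ∀ d : ℝ, c * d = z₁ * d + z₂ * d := fun d => by rw [hz1def, hz2def]; ring
  have hprod2 : ∀ p : ℝ, z₂ * (z₁ * p) = -p := fun p => by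
    rw [← mul_assoc, mul_comm z₂ z₁, hmul]; ring
  have hprod1 : ∀ p : ℝ, z₁ * (z₂ * p) = -p := fun p => by
    rw [← mul_assoc, hmul]; ring
  have hdiv2 : z₂ * ((κ+M)/z₂) = κ + M := by field_simp
  have hdiv1 : (-z₁) * ((κ+M)/(-z₁)) = κ + M := by
    have hne : (-z₁) ≠ 0 := by linarith
    rw [mul_comm, div_mul_cancel₀ _ hne]
  have hB2 : 0 ≤ (κ+M)/z₂ := div_nonneg (by linarith) hz₂.le
  have hB1 : 0 ≤ (κ+M)/(-z₁) := div_nonneg (by linarith) (by linarith)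
  -- differentiability
  have hφd : Differentiable ℝ φ := hφ.differentiable (by norm_num)
  have hφ' : Differentiable ℝ (deriv φ) := by
    have h2 : ContDiff ℝ ((1:ℕ) + 1) φ := by exact_mod_cast hφ
    exact ((contDiff_succ_iff_deriv.mp h2).2.2).differentiable (by norm_num)
  have hD1 : ∀ t, HasDerivAt φ (deriv φ t) t := fun t => (hφd t).hasDerivAt
  have hD2 : ∀ t, HasDerivAt (deriv φ) (c * deriv φ t - f (φ t) (φ (t - r))) t := by
    intro t
    have h := (hφ' t).hasDerivAt
    have h2 := heq t
    exact h.congr_deriv (by linarith)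
  have hvD : ∀ t, HasDerivAt (fun t => deriv φ t - z₁ * φ t)
      ((c * deriv φ t - f (φ t) (φ (t - r))) - z₁ * deriv φ t) t :=
    fun t => (hD2 t).sub ((hD1 t).const_mul z₁)
  have hwD : ∀ t, HasDerivAt (fun t => deriv φ t - z₂ * φ t)
      ((c * deriv φ t - f (φ t) (φ (t - r))) - z₂ * deriv φ t) t :=
    fun t => (hD2 t).sub ((hD1 t).const_mul z₂)
  have hrefl : ∀ x : ℝ, HasDerivAt (fun y : ℝ => -y) (-1 : ℝ) x := fun x => (hasDerivAt_id x).neg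
  -- bound on v := deriv φ - z₁ φ
  have hvB : ∀ t, z₂ * |deriv φ t - z₁ * φ t| ≤ κ + M := by
    intro t
    rw [← abs_of_pos hz₂, ← abs_mul, abs_le]
    constructor
    · by_contra hcon
      push_neg at hcon
      refine aux_blowup z₂ 0 κ hz₂ (le_refl 0) hκ.le
        (fun x => -(deriv φ x - z₁ * φ x) - (κ+M)/z₂) (fun x => κ - φ x)
        (fun x => -((c * deriv φ x - f (φ x) (φ (x - r))) - z₁ * deriv φ x))
        (fun x => -(deriv φ x))
        (fun x => ((hvD x).neg).sub_const _) (fun x => (hD1 x).const_sub κ)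
        ?_ ?_ ?_ t ?_
      · intro x
        beta_reduce
        have hf := abs_le.mp (hfb x)
        have hbx := hb x
        linarith [hsum (deriv φ x), hprod2 (φ x), hdiv2, hf.1, hf.2, hbx.1, hbx.2]
      · intro x
        beta_reduce
        have hbx := hb x
        have h1 : z₁ * φ x ≤ 0 := mul_nonpos_of_nonpos_of_nonneg hz₁.le hbx.1
        linarith
      · intro x
        have h := hb x
        rw [mem_Icc] at h ⊢
        refine ⟨?_, ?_⟩
        · show (0:ℝ) ≤ κ - φ x; linarith [h.2]
        · show κ - φ x ≤ κ; linarith [h.1]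
      · beta_reduce
        have h1 : 0 < z₂ * (-(deriv φ t - z₁ * φ t) - (κ+M)/z₂) := by
          linarith [hdiv2, hcon]
        have h2 := div_pos h1 hz₂
        rwa [mul_div_cancel_left₀ _ (ne_of_gt hz₂)] at h2
    · by_contra hcon
      push_neg at hcon
      refine aux_blowup z₂ (-z₁ * κ) κ hz₂ (by nlinarith) hκ.le
        (fun x => (deriv φ x - z₁ * φ x) - (κ+M)/z₂) φ
        (fun x => (c * deriv φ x - f (φ x) (φ (x - r))) - z₁ * deriv φ x)
        (fun x => deriv φ x)
        (fun x => (hvD x).sub_const _) hD1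
        ?_ ?_ hb t ?_
      · intro x
        beta_reduce
        have hf := abs_le.mp (hfb x)
        have hbx := hb x
        linarith [hsum (deriv φ x), hprod2 (φ x), hdiv2, hf.1, hf.2, hbx.1, hbx.2]
      · intro x
        beta_reduce
        have hbx := hb x
        have h1 : z₁ * (κ - φ x) ≤ 0 :=
          mul_nonpos_of_nonpos_of_nonneg hz₁.le (by linarith [hbx.2])
        nlinarith [hbx.1, hbx.2]
      · beta_reduce
        have h1 : 0 < z₂ * ((deriv φ t - z₁ * φ t) - (κ+M)/z₂) := by
          linarith [hdiv2, hcon]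
        have h2 := div_pos h1 hz₂
        rwa [mul_div_cancel_left₀ _ (ne_of_gt hz₂)] at h2
  -- bound on w := deriv φ - z₂ φ (backward in time via reflection)
  have hz₁' : (0:ℝ) < -z₁ := by linarith
  have hwDr : ∀ x : ℝ, HasDerivAt (fun y => deriv φ (-y) - z₂ * φ (-y))
      (-((c * deriv φ (-x) - f (φ (-x)) (φ (-x - r))) - z₂ * deriv φ (-x))) x := by
    intro x
    have h := (hwD (-x)).comp x (hrefl x)
    exact h.congr_deriv (by ring)
  have hφr : ∀ x : ℝ, HasDerivAt (fun y => φ (-y)) (-(deriv φ (-x))) x := by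
    intro x
    have h := (hD1 (-x)).comp x (hrefl x)
    exact h.congr_deriv (by ring)
  have hwB : ∀ t, (-z₁) * |deriv φ t - z₂ * φ t| ≤ κ + M := by
    intro t
    rw [← abs_of_pos hz₁', ← abs_mul, abs_le]
    constructor
    · by_contra hcon
      push_neg at hcon
      refine aux_blowup (-z₁) (z₂ * κ) κ hz₁' (by positivity) hκ.le
        (fun x => -(deriv φ (-x) - z₂ * φ (-x)) - (κ+M)/(-z₁)) (fun x => φ (-x))
        (fun x => ((c * deriv φ (-x) - f (φ (-x)) (φ (-x - r))) - z₂ * deriv φ (-x)))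
        (fun x => -(deriv φ (-x)))
        ?_ hφr
        ?_ ?_ (fun x => hb (-x)) (-t) ?_
      · intro x
        have h := ((hwDr x).neg).sub_const ((κ+M)/(-z₁))
        exact h.congr_deriv (by ring)
      · intro x
        beta_reduce
        have hf := abs_le.mp (hfb (-x))
        have hbx := hb (-x)
        linarith [hsum (deriv φ (-x)), hprod1 (φ (-x)), hdiv1, hf.1, hf.2, hbx.1, hbx.2]
      · intro x
        beta_reduce
        have hbx := hb (-x)
        have h1 : 0 ≤ z₂ * φ (-x) := mul_nonneg hz₂.le hbx.1
        nlinarith [hbx.2]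
      · beta_reduce
        have h1 : 0 < (-z₁) * (-(deriv φ (-(-t)) - z₂ * φ (-(-t))) - (κ+M)/(-z₁)) := by
          simp only [neg_neg]
          linarith [hdiv1, hcon]
        have h2 := div_pos h1 hz₁'
        rwa [mul_div_cancel_left₀ _ (ne_of_gt hz₁')] at h2
    · by_contra hcon
      push_neg at hcon
      refine aux_blowup (-z₁) (z₂ * κ) κ hz₁' (by positivity) hκ.le
        (fun x => (deriv φ (-x) - z₂ * φ (-x)) - (κ+M)/(-z₁)) (fun x => κ - φ (-x))
        (fun x => -((c * deriv φ (-x) - f (φ (-x)) (φ (-x - r))) - z₂ * deriv φ (-x)))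
        (fun x => deriv φ (-x))
        (fun x => (hwDr x).sub_const _)
        ?_
        ?_ ?_ ?_ (-t) ?_
      · intro x
        have h := (hφr x).const_sub κ
        exact h.congr_deriv (by ring)
      · intro x
        beta_reduce
        have hf := abs_le.mp (hfb (-x))
        have hbx := hb (-x)
        linarith [hsum (deriv φ (-x)), hprod1 (φ (-x)), hdiv1, hf.1, hf.2, hbx.1, hbx.2]
      · intro x
        beta_reduce
        have hbx := hb (-x)
        have h1 : 0 ≤ z₂ * φ (-x) := mul_nonneg hz₂.le hbx.1
        nlinarith [hbx.2]
      · intro x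
        have h := hb (-x)
        rw [mem_Icc] at h ⊢
        refine ⟨?_, ?_⟩
        · show (0:ℝ) ≤ κ - φ (-x); linarith [h.2]
        · show κ - φ (-x) ≤ κ; linarith [h.1]
      · beta_reduce
        have h1 : 0 < (-z₁) * ((deriv φ (-(-t)) - z₂ * φ (-(-t))) - (κ+M)/(-z₁)) := by
          simp only [neg_neg]
          linarith [hdiv1, hcon]
        have h2 := div_pos h1 hz₁'
        rwa [mul_div_cancel_left₀ _ (ne_of_gt hz₁')] at h2
  -- combine the two bounds
  intro t
  have h1 := hvB t
  have h2 := hwB t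
  have key : (z₂ - z₁) * |deriv φ t| ≤ 2 * (κ + M) := by
    have e : (z₂ - z₁) * deriv φ t
        = z₂ * (deriv φ t - z₁ * φ t) - z₁ * (deriv φ t - z₂ * φ t) := by ring
    have h3 : |(z₂ - z₁) * deriv φ t| ≤ 2 * (κ+M) := by
      rw [e]
      calc |z₂ * (deriv φ t - z₁ * φ t) - z₁ * (deriv φ t - z₂ * φ t)|
          ≤ |z₂ * (deriv φ t - z₁ * φ t)| + |z₁ * (deriv φ t - z₂ * φ t)| := abs_sub _ _
        _ = z₂ * |deriv φ t - z₁ * φ t| + (-z₁) * |deriv φ t - z₂ * φ t| := by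
            rw [abs_mul, abs_mul, abs_of_pos hz₂, abs_of_neg hz₁]
        _ ≤ 2 * (κ + M) := by linarith
    rwa [abs_mul, abs_of_pos (by linarith : (0:ℝ) < z₂ - z₁)] at h3
  have hzs : z₂ - z₁ = s := by rw [hz2def, hz1def]; ring
  rw [hzs] at key
  nlinarith [mul_nonneg (by linarith : (0:ℝ) ≤ s - 2) (abs_nonneg (deriv φ t))]
end

section
/- Let F(λ) = ελ² − λ + α + βe^{−hλ} with ε > 0, h > 0, α + β < 0, β < 0, and suppose F has exactly three real roots λ₁ ≤ λ₂ < 0 < λ₃ (counting multiplicity) and the greatest negative root λ₂ satisfies F'(λ₂) ≤ 0. If z = λ₂ + iθ with θ > 0 is also a root of F (extended to ℂ), then taking the imaginary part yields θ(2ελ₂ − 1 + h|β|e^{−hλ₂} sin(hθ)/(hθ)) = 0, which is impossible since sin(x)/x < 1 for x > 0 and 2ελ₂ − 1 + h|β|e^{−hλ₂} ≤ 0. Hence F has no complex root with real part equal to λ₂ and nonzero imaginary part. -/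
open Real Complex

theorem key (ε h β lam₂ θ : ℝ) (hε : 0 < ε) (hh : 0 < h) (hβ : β < 0)
    (hlam : lam₂ < 0) (hθ : 0 < θ)
    (hder : 2 * ε * lam₂ - 1 + h * |β| * Real.exp (-h * lam₂) ≤ 0) :
    2 * ε * lam₂ * θ - θ + |β| * Real.exp (-h * lam₂) * Real.sin (h * θ) < 0 := by
  have hE : 0 < Real.exp (-h * lam₂) := Real.exp_pos _
  have hb : 0 < |β| := abs_pos.mpr (ne_of_lt hβ)
  have hs : Real.sin (h * θ) < h * θ := Real.sin_lt (by positivity)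
  nlinarith [mul_pos hb hE, mul_pos (mul_pos hb hE) hθ]

/-- If `λ₂ < 0` is a real root of `F` with `F'(λ₂) ≤ 0`, then `F` (extended to `ℂ`)
has no root of the form `λ₂ + iθ` with `θ ≠ 0`. -/
theorem stmt_18 (ε h α β lam₂ : ℝ) (hε : 0 < ε) (hh : 0 < h) (hβ : β < 0)
    (hαβ : α + β < 0) (hlam : lam₂ < 0)
    (hroot : ε * lam₂ ^ 2 - lam₂ + α + β * Real.exp (-h * lam₂) = 0)
    (hder : 2 * ε * lam₂ - 1 + h * |β| * Real.exp (-h * lam₂) ≤ 0) :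
    ∀ θ : ℝ, θ ≠ 0 →
      (ε : ℂ) * (lam₂ + θ * Complex.I) ^ 2 - (lam₂ + θ * Complex.I) + (α : ℂ)
        + (β : ℂ) * Complex.exp (-(h : ℂ) * (lam₂ + θ * Complex.I)) ≠ 0 := by
  intro θ hθ hz
  have him := congrArg Complex.im hz
  simp [Complex.add_im, Complex.sub_im, Complex.mul_im, Complex.mul_re,
    Complex.exp_im, Complex.exp_re, Complex.add_re, Complex.sub_re, Complex.neg_re,
    Complex.neg_im, Complex.I_re, Complex.I_im, Complex.ofReal_re, Complex.ofReal_im,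
    pow_two] at him
  have him2 : 2*ε*lam₂*θ - θ - β*Real.exp (-(h*lam₂))*Real.sin (h*θ) = 0 := by
    linear_combination him
  rcases hθ.lt_or_gt with ht | ht
  · have hk := key ε h β lam₂ (-θ) hε hh hβ hlam (by linarith) hder
    rw [abs_of_neg hβ, show h * -θ = -(h*θ) by ring, Real.sin_neg, neg_mul h lam₂] at hk
    nlinarith [him2]
  · have hk := key ε h β lam₂ θ hε hh hβ hlam ht hder
    rw [abs_of_neg hβ, neg_mul h lam₂] at hk
    nlinarith [him2]
end

section
/- Let λ(h) < 0 and ε₀(h) > 0 solve the system ελ² − λ + α = −βe^{−hλ}, 2ελ − 1 = hβe^{−hλ} (double-root conditions for F), with β < 0. Then ε₀'(h) = βe^{−λh}/λ > 0; consequently c(h) := ε₀(h)^{−1/2} is strictly decreasing in h on the interval where it is defined. -/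
open Real Set

/-- Along the double-root branch, `ε₀'(h) = β e^{−hλ(h)}/λ(h) > 0`; hence
`c(h) = ε₀(h)^{−1/2}` is strictly decreasing. -/
theorem stmt_19 (α β a b : ℝ) (hβ : β < 0) (hab : a < b)
    (lam ε₀ : ℝ → ℝ)
    (hlamd : ∀ x ∈ Ioo a b, DifferentiableAt ℝ lam x)
    (hεd : ∀ x ∈ Ioo a b, DifferentiableAt ℝ ε₀ x)
    (hlamneg : ∀ x ∈ Ioo a b, lam x < 0)
    (hεpos : ∀ x ∈ Ioo a b, 0 < ε₀ x)
    (heq1 : ∀ x ∈ Ioo a b,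
      ε₀ x * (lam x) ^ 2 - lam x + α + β * Real.exp (-x * lam x) = 0)
    (heq2 : ∀ x ∈ Ioo a b,
      2 * ε₀ x * lam x - 1 = x * β * Real.exp (-x * lam x)) :
    (∀ x ∈ Ioo a b,
      deriv ε₀ x = β * Real.exp (-x * lam x) / lam x ∧ 0 < deriv ε₀ x) ∧
    StrictAntiOn (fun x => (ε₀ x) ^ (-(1 : ℝ) / 2)) (Ioo a b) := by
  have key : ∀ x ∈ Ioo a b,
      deriv ε₀ x = β * Real.exp (-x * lam x) / lam x ∧ 0 < deriv ε₀ x := by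
    intro x hx
    have hLne : lam x ≠ 0 := (hlamneg x hx).ne
    have h1 : HasDerivAt lam (deriv lam x) x := (hlamd x hx).hasDerivAt
    have h2 : HasDerivAt ε₀ (deriv ε₀ x) x := (hεd x hx).hasDerivAt
    set L := lam x with hL
    set E' := deriv ε₀ x with hE'
    set L' := deriv lam x with hL'
    -- derivative of -x * lam x
    have h3 : HasDerivAt (fun y => -y * lam y) (-1 * L + -x * L') x := by
      exact ((hasDerivAt_id x).neg.mul h1)
    have h4 : HasDerivAt (fun y => β * Real.exp (-y * lam y))
        (β * (Real.exp (-x * L) * (-1 * L + -x * L'))) x := (h3.exp).const_mul β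
    have h5 : HasDerivAt (fun y => lam y ^ 2) (2 * L ^ 1 * L') x := h1.pow 2
    have h6 : HasDerivAt (fun y => ε₀ y * lam y ^ 2)
        (E' * L ^ 2 + ε₀ x * (2 * L ^ 1 * L')) x := h2.mul h5
    have hg : HasDerivAt
        (fun y => ε₀ y * lam y ^ 2 - lam y + α + β * Real.exp (-y * lam y))
        ((E' * L ^ 2 + ε₀ x * (2 * L ^ 1 * L')) - L' + 0 +
          β * (Real.exp (-x * L) * (-1 * L + -x * L'))) x :=
      ((h6.sub h1).add (hasDerivAt_const x α)).add h4
    have hev : (fun y => ε₀ y * lam y ^ 2 - lam y + α + β * Real.exp (-y * lam y))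
        =ᶠ[nhds x] fun _ => (0 : ℝ) := by
      filter_upwards [isOpen_Ioo.mem_nhds hx] with y hy using heq1 y hy
    have hg0 : HasDerivAt
        (fun y => ε₀ y * lam y ^ 2 - lam y + α + β * Real.exp (-y * lam y))
        (0 : ℝ) x := (hasDerivAt_const x (0 : ℝ)).congr_of_eventuallyEq hev
    have hD : (E' * L ^ 2 + ε₀ x * (2 * L ^ 1 * L')) - L' + 0 +
        β * (Real.exp (-x * L) * (-1 * L + -x * L')) = 0 := hg.unique hg0
    have h2e := heq2 x hx
    have hmul : E' * L = β * Real.exp (-x * L) := by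
      have hsq : (E' * L) * L = (β * Real.exp (-x * L)) * L := by
        linear_combination hD - L' * h2e
      exact mul_right_cancel₀ hLne hsq
    have hEq : E' = β * Real.exp (-x * L) / L := by
      rw [eq_div_iff hLne]; exact hmul
    refine ⟨hEq, ?_⟩
    rw [hEq]
    exact div_pos_of_neg_of_neg
      (mul_neg_of_neg_of_pos hβ (Real.exp_pos _)) (hlamneg x hx)
  refine ⟨key, ?_⟩
  have hmono : StrictMonoOn ε₀ (Ioo a b) := by
    apply strictMonoOn_of_deriv_pos (convex_Ioo a b)
    · exact fun y hy => (hεd y hy).continuousAt.continuousWithinAt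
    · intro y hy
      rw [interior_Ioo] at hy
      exact (key y hy).2
  intro x hx y hy hxy
  have hlt := hmono hx hy hxy
  exact Real.rpow_lt_rpow_of_neg (hεpos x hx) hlt (by norm_num)
end
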